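/- Define the sequence (v_k) of positive integers by v_1 = 1 and v_{k+1} = v_k if 2 v_k > u_{k+1}, and v_{k+1} = ⌊u_{k+1}/v_k⌋ · v_k otherwise, where (u_k) is a nondecreasing unbounded sequence of positive reals. Then for every k ≥ 1, u_k / 2 ≤ v_k implies u_{k+1}/2 ≤ v_{k+1}; in particular v_k ≥ u_k/2 for all k with v_{k-1} defined, and v_k → +∞. -/
import Mathlib


open Filter

/-- The recursive construction `v 0 = 1`, `v (k+1) = v k` if `2 v k > u (k+1)` and
`v (k+1) = ⌊u (k+1) / v k⌋ * v k` otherwise, tracks the nondecreasing unbounded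
positive sequence `u` within a factor `2` from below, and diverges. -/
theorem stmt3 (u : ℕ → ℝ) (hpos : ∀ k, 0 < u k) (hmono : Monotone u)
    (hunb : Tendsto u atTop atTop) (v : ℕ → ℕ) (hv1 : v 0 = 1)
    (hrec : ∀ k, v (k + 1) =
      if 2 * (v k : ℝ) > u (k + 1) then v k else ⌊u (k + 1) / (v k : ℝ)⌋₊ * v k) :
    (∀ k, u k / 2 ≤ (v k : ℝ) → u (k + 1) / 2 ≤ (v (k + 1) : ℝ)) ∧
    (∀ k, u (k + 1) / 2 ≤ (v (k + 1) : ℝ)) ∧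
    Tendsto (fun k => (v k : ℝ)) atTop atTop := by
  -- positivity of v
  have hvpos : ∀ k, 0 < v k := by
    intro k
    induction k with
    | zero => simp [hv1]
    | succ n ih =>
      rw [hrec n]
      split_ifs with h
      · exact ih
      · push_neg at h
        have hv : (0:ℝ) < (v n : ℝ) := by exact_mod_cast ih
        have hx : (2:ℝ) ≤ u (n + 1) / v n := (le_div_iff₀ hv).mpr (by linarith)
        have : 2 ≤ ⌊u (n + 1) / (v n : ℝ)⌋₊ := Nat.le_floor (by exact_mod_cast hx)
        exact Nat.mul_pos (by omega) ih
  -- key step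
  have key : ∀ k, u (k + 1) / 2 ≤ (v (k + 1) : ℝ) := by
    intro k
    have hv : (0:ℝ) < (v k : ℝ) := by exact_mod_cast hvpos k
    rw [hrec k]
    split_ifs with h
    · linarith
    · push_neg at h
      have hx : (2:ℝ) ≤ u (k + 1) / v k := (le_div_iff₀ hv).mpr (by linarith)
      have hf : u (k + 1) / v k - 1 < (⌊u (k + 1) / (v k : ℝ)⌋₊ : ℝ) :=
        Nat.sub_one_lt_floor _
      have hle : u (k + 1) / v k / 2 ≤ (⌊u (k + 1) / (v k : ℝ)⌋₊ : ℝ) := by linarith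
      have := mul_le_mul_of_nonneg_right hle hv.le
      rw [div_mul_eq_mul_div, div_mul_cancel₀ _ hv.ne'] at this
      calc u (k + 1) / 2 ≤ (⌊u (k + 1) / (v k : ℝ)⌋₊ : ℝ) * v k := by linarith
        _ = ((⌊u (k + 1) / (v k : ℝ)⌋₊ * v k : ℕ) : ℝ) := by push_cast; ring
  refine ⟨fun k _ => key k, key, ?_⟩
  have hdiv : Tendsto (fun k => u k / 2) atTop atTop :=
    hunb.atTop_div_const (by norm_num)
  apply tendsto_atTop_mono' _ _ hdiv
  filter_upwards [eventually_ge_atTop 1] with k hk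
  obtain ⟨m, rfl⟩ := Nat.exists_eq_add_of_le hk
  simpa [add_comm] using key m
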